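/- For every n ≥ 1, the space of rational class functions on S_n decomposes as C(S_n) ⊗ ℚ = τ_n ∪ (C(S_n) ⊗ ℚ) + r_1(C(S_{n−1}) ⊗ ℚ); that is, every rational class function on S_n is a sum of a cup product of τ_n with a rational class function on S_n and the image under r_1 of a rational class function on S_{n−1}. -/

import Mathlib

noncomputable section

/-- `permDeg π` is the minimal number of transpositions whose product is `π`. -/
def permDeg {n : ℕ} (π : Equiv.Perm (Fin n)) : ℕ :=
  sInf {d | ∃ l : List (Equiv.Perm (Fin n)),
    (∀ t ∈ l, t.IsSwap) ∧ l.prod = π ∧ l.length = d}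

/-- The cup product on the group ring, extended bilinearly from
`σ ∪ π = σπ` if `deg σ + deg π = deg (σπ)` and `0` otherwise. -/
def cup {n : ℕ} (f g : MonoidAlgebra ℚ (Equiv.Perm (Fin n))) :
    MonoidAlgebra ℚ (Equiv.Perm (Fin n)) :=
  f.coeff.sum fun σ a => g.coeff.sum fun π b =>
    if permDeg σ + permDeg π = permDeg (σ * π)
    then MonoidAlgebra.single (σ * π) (a * b) else 0

/-- `tau n` is the sum of all transpositions in `S_n`, as an element of `ℚ[S_n]`. -/
def tau (n : ℕ) : MonoidAlgebra ℚ (Equiv.Perm (Fin n)) :=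
  letI := Classical.decPred (Equiv.Perm.IsSwap : Equiv.Perm (Fin n) → Prop)
  ∑ σ ∈ Finset.univ.filter (fun σ : Equiv.Perm (Fin n) => σ.IsSwap),
    MonoidAlgebra.single σ (1 : ℚ)

/-- The standard inclusion `S_n ⊂ S_{n+1}` (permutations fixing the last letter). -/
def iotaPerm (n : ℕ) (π : Equiv.Perm (Fin n)) : Equiv.Perm (Fin (n + 1)) :=
  π.viaFintypeEmbedding Fin.castSuccEmb

/-- The induced map `ι : ℚ[S_n] → ℚ[S_{n+1}]`. -/
def iota (n : ℕ) (f : MonoidAlgebra ℚ (Equiv.Perm (Fin n))) :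
    MonoidAlgebra ℚ (Equiv.Perm (Fin (n + 1))) :=
  MonoidAlgebra.ofCoeff (Finsupp.mapDomain (iotaPerm n) f.coeff)

/-- `f ∈ ℚ[S_n]` is a class function if its coefficients are constant on
conjugacy classes. -/
def IsClassFun {n : ℕ} (f : MonoidAlgebra ℚ (Equiv.Perm (Fin n))) : Prop :=
  ∀ σ π : Equiv.Perm (Fin n), f.coeff (σ * π * σ⁻¹) = f.coeff π

/-- The map `r_1 : ℚ[S_n] → ℚ[S_{n+1}]`, `x ↦ (1/n!) Σ_{t ∈ S_{n+1}} t ι(x) t⁻¹`. -/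
def r1 (n : ℕ) (x : MonoidAlgebra ℚ (Equiv.Perm (Fin n))) :
    MonoidAlgebra ℚ (Equiv.Perm (Fin (n + 1))) :=
  (n.factorial : ℚ)⁻¹ • ∑ t : Equiv.Perm (Fin (n + 1)),
    MonoidAlgebra.single t 1 * iota n x * MonoidAlgebra.single t⁻¹ 1

instance CFDcoeFun {G : Type*} : CoeFun (MonoidAlgebra ℚ G) (fun _ => G → ℚ) := ⟨fun f => f.coeff⟩

theorem Equiv.Perm.apply_inv_self {β : Type*} (c : Equiv.Perm β) (y : β) : c (c⁻¹ y) = y := c.apply_symm_apply y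

open Equiv Equiv.Perm Finset

set_option linter.unusedSectionVars false
namespace CFD

variable {α : Type*} [Fintype α] [DecidableEq α] [LinearOrder α]

def OS (g : Perm α) (x : α) : Finset α := univ.filter fun y => g.SameCycle x y

def osize (g : Perm α) (x : α) : ℕ := (OS g x).card

def cdeg (g : Perm α) : ℕ := (univ.filter fun x => ∃ y, y < x ∧ g.SameCycle x y).card

def fsum (g : Perm α) : ℕ := ∑ x, osize g x

lemma mem_OS {g : Perm α} {x u : α} : u ∈ OS g x ↔ g.SameCycle x u := by
  simp [OS]

lemma self_mem_OS (g : Perm α) (x : α) : x ∈ OS g x := mem_OS.2 (SameCycle.refl g x)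

lemma osize_pos (g : Perm α) (x : α) : 0 < osize g x := card_pos.2 ⟨x, self_mem_OS g x⟩

lemma OS_eq_of_sameCycle {g : Perm α} {x u : α} (h : g.SameCycle x u) : OS g u = OS g x := by
  ext v; simp only [mem_OS]
  exact ⟨fun hv => h.trans hv, fun hv => h.symm.trans hv⟩

lemma OS_eq_singleton_of_fixed {g : Perm α} {x : α} (hx : g x = x) : OS g x = {x} := by
  ext u; simp only [mem_OS, mem_singleton]
  constructor
  · intro h; exact (h.eq_of_left hx).symm
  · rintro rfl; exact SameCycle.refl g _

lemma pow_apply_eq_self_iff_osize_dvd (g : Perm α) (x : α) (n : ℕ) :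
    (g ^ n) x = x ↔ osize g x ∣ n := by
  by_cases hx : g x = x
  · have h2 : osize g x = 1 := by rw [osize, OS_eq_singleton_of_fixed hx, card_singleton]
    have h4 : (g ^ n) x = x := Equiv.Perm.pow_apply_eq_self_of_apply_eq_self hx n
    simp [h2, h4]
  · have hxs : x ∈ g.support := mem_support.2 hx
    have hOS : OS g x = (g.cycleOf x).support := by
      ext u
      rw [mem_OS, Equiv.Perm.mem_support_cycleOf_iff]
      exact ⟨fun h => ⟨h, hxs⟩, fun h => h.1⟩
    have hmem : x ∈ (g.cycleOf x).support := by rw [← hOS]; exact self_mem_OS g x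
    have h3 := (g.isCycleOn_support_cycleOf x).pow_apply_eq hmem (n := n)
    rw [osize, hOS]; exact h3

lemma sameCycle_iff_exists_pow_lt (g : Perm α) (x u : α) :
    g.SameCycle x u ↔ ∃ m, m < osize g x ∧ (g ^ m) x = u := by
  constructor
  · intro h
    obtain ⟨i, _hi0, _hile, hiu⟩ := h.exists_pow_eq g
    refine ⟨i % osize g x, Nat.mod_lt _ (osize_pos g x), ?_⟩
    have h4 : (g ^ (osize g x * (i / osize g x))) x = x :=
      (pow_apply_eq_self_iff_osize_dvd g x _).2 (Dvd.intro _ rfl)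
    have h5 : (g ^ i) x = u := hiu
    rw [← Nat.mod_add_div i (osize g x), pow_add, Equiv.Perm.mul_apply, h4] at h5
    exact h5
  · rintro ⟨m, _, rfl⟩
    exact ⟨(m : ℤ), by rw [zpow_natCast]⟩

lemma osize_eq_one_iff {g : Perm α} {x : α} : osize g x = 1 ↔ g x = x := by
  constructor
  · intro h1
    by_contra hx
    have h2 : g x ∈ OS g x := mem_OS.2 ⟨1, by simp⟩
    have h3 : x ∈ OS g x := self_mem_OS g x
    have : 1 < osize g x := one_lt_card.2 ⟨_, h2, _, h3, fun h => hx h⟩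
    omega
  · intro hx
    rw [osize, OS_eq_singleton_of_fixed hx, card_singleton]

lemma osize_le_card (g : Perm α) (x : α) : osize g x ≤ Fintype.card α :=
  le_trans (card_le_card (subset_univ _)) (le_of_eq (card_univ))

lemma fsum_le (g : Perm α) : fsum g ≤ Fintype.card α * Fintype.card α := by
  calc fsum g ≤ ∑ _x : α, Fintype.card α := Finset.sum_le_sum fun x _ => osize_le_card g x
  _ = Fintype.card α * Fintype.card α := by rw [Finset.sum_const, card_univ, smul_eq_mul]

section Core

variable {g : Perm α} {x y : α}

lemma step_fix {u w : α} (hux : ¬ g.SameCycle u x) (huy : ¬ g.SameCycle u y)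
    (hw : g.SameCycle u w) : (swap x y * g) w = g w := by
  have h1 : g w ≠ x := fun h => hux (h ▸ hw.trans ⟨1, by simp⟩)
  have h2 : g w ≠ y := fun h => huy (h ▸ hw.trans ⟨1, by simp⟩)
  simp [Equiv.Perm.mul_apply, swap_apply_of_ne_of_ne h1 h2]

lemma pow_eq_of_nc {u : α} (hux : ¬ g.SameCycle u x) (huy : ¬ g.SameCycle u y) :
    ∀ m : ℕ, ((swap x y * g) ^ m) u = (g ^ m) u := by
  intro m; induction m with
  | zero => simp
  | succ m ih =>
    rw [pow_succ', pow_succ', Equiv.Perm.mul_apply, Equiv.Perm.mul_apply, ih]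
    exact step_fix hux huy ⟨(m : ℤ), by rw [zpow_natCast]⟩

lemma sameCycle_swap_mul_of_nc {u : α} (hux : ¬ g.SameCycle u x)
    (huy : ¬ g.SameCycle u y) (v : α) :
    ((swap x y * g).SameCycle u v ↔ g.SameCycle u v) := by
  constructor
  · intro h
    obtain ⟨m, _, rfl⟩ := (sameCycle_iff_exists_pow_lt _ u v).1 h
    rw [pow_eq_of_nc hux huy m]
    exact ⟨(m : ℤ), by rw [zpow_natCast]⟩
  · intro h
    obtain ⟨m, _, rfl⟩ := (sameCycle_iff_exists_pow_lt g u v).1 h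
    rw [← pow_eq_of_nc hux huy m]
    exact ⟨(m : ℤ), by rw [zpow_natCast]⟩

/-- outside the orbit of `x`, multiplication by the swap does not change same-cycle
relations (split form : assumes `SameCycle g x y`). -/
lemma sameCycle_swap_mul_outside (hsc : g.SameCycle x y) {u : α}
    (hu : ¬ g.SameCycle x u) (v : α) :
    ((swap x y * g).SameCycle u v ↔ g.SameCycle u v) := by
  refine sameCycle_swap_mul_of_nc (fun h => hu h.symm) (fun h => hu ?_) v
  exact hsc.trans h.symm

lemma aux_pow (g : Perm α) (x y : α) (m : ℕ) (start : α)
    (h0 : ∀ i, i < m → swap x y ((g ^ (i+1)) start) = (g ^ (i+1)) start) :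
    ∀ i, i ≤ m → ((swap x y * g) ^ i) start = (g ^ i) start := by
  intro i; induction i with
  | zero => simp
  | succ i ih =>
    intro hi
    rw [pow_succ', Equiv.Perm.mul_apply, ih (by omega), pow_succ',
      Equiv.Perm.mul_apply, Equiv.Perm.mul_apply]
    have := h0 i (by omega)
    rw [pow_succ', Equiv.Perm.mul_apply] at this
    exact this

lemma orbit_of_period (h : Perm α) (x : α) (j : ℕ) (hj : 0 < j) (hjx : (h ^ j) x = x) :
    ∀ u, h.SameCycle x u → ∃ i, i < j ∧ (h ^ i) x = u := by
  intro u hu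
  obtain ⟨m, _, rfl⟩ := (sameCycle_iff_exists_pow_lt h x u).1 hu
  refine ⟨m % j, Nat.mod_lt _ hj, ?_⟩
  have h4 : (h ^ (j * (m / j))) x = x := by
    rw [pow_mul]
    exact Equiv.Perm.pow_apply_eq_self_of_apply_eq_self hjx _
  conv_rhs => rw [← Nat.mod_add_div m j]
  rw [pow_add, Equiv.Perm.mul_apply, h4]

theorem split_main (hxy : x ≠ y) (hsc : g.SameCycle x y) :
    ¬ ((swap x y * g).SameCycle x y) ∧
      (∀ u, g.SameCycle x u ↔
        ((swap x y * g).SameCycle x u ∨ (swap x y * g).SameCycle y u)) := by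
  set k := osize g x with hk
  clear_value k
  obtain ⟨j, hjk, hjx⟩ := (sameCycle_iff_exists_pow_lt g x y).1 hsc
  rw [← hk] at hjk
  have hj0 : 0 < j := by
    rcases Nat.eq_zero_or_pos j with h | h
    · subst h; simp at hjx; exact absurd hjx hxy
    · exact h
  have hgk : (g ^ k) x = x := (pow_apply_eq_self_iff_osize_dvd g x k).2 (by rw [hk])
  have hd : ∀ d, 0 < d → d < k → (g ^ d) x ≠ x := by
    intro d h1 h2 hc
    have h3 := (pow_apply_eq_self_iff_osize_dvd g x d).1 hc
    have h4 := Nat.le_of_dvd h1 h3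
    omega
  have hdist : ∀ a b, a < b → b < k → (g ^ a) x ≠ (g ^ b) x := by
    intro a b hab hbk hc
    have h5 : (g ^ a) ((g ^ (b - a)) x) = (g ^ a) x := by
      rw [← Equiv.Perm.mul_apply, ← pow_add]
      have : a + (b - a) = b := by omega
      rw [this, ← hc]
    exact hd (b - a) (by omega) (by omega) ((g ^ a).injective h5)
  set h := swap x y * g with hh
  -- x side
  have hx_side : ∀ i, i ≤ j - 1 → (h ^ i) x = (g ^ i) x := by
    refine aux_pow g x y (j - 1) x (fun i hi => ?_)
    refine swap_apply_of_ne_of_ne (hd (i+1) (by omega) (by omega)) ?_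
    rw [← hjx]
    exact hdist (i+1) j (by omega) hjk
  have hxj : (h ^ j) x = x := by
    have hj1 : j = (j - 1) + 1 := by omega
    rw [hj1, pow_succ', Equiv.Perm.mul_apply, hx_side (j-1) (le_refl _)]
    have e2 : g ((g ^ (j-1)) x) = y := by
      rw [← Equiv.Perm.mul_apply, ← pow_succ', ← hj1, hjx]
    rw [hh, Equiv.Perm.mul_apply, e2, swap_apply_right]
  -- y side
  have hy_pow : ∀ i, i ≤ k - j - 1 → (h ^ i) y = (g ^ (j + i)) x := by
    intro i hi
    have h6 : ∀ i', i' ≤ k - j - 1 → (h ^ i') y = (g ^ i') y := by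
      refine aux_pow g x y (k - j - 1) y (fun i' hi' => ?_)
      have e1 : (g ^ (i'+1)) y = (g ^ (j + i' + 1)) x := by
        rw [← hjx, ← Equiv.Perm.mul_apply, ← pow_add]
        congr 1; exact congrArg (fun e => g ^ e) (by omega)
      rw [e1]
      refine swap_apply_of_ne_of_ne (hd (j + i' + 1) (by omega) (by omega)) ?_
      rw [← hjx]
      exact fun hc => hdist j (j + i' + 1) (by omega) (by omega) hc.symm
    rw [h6 i hi, ← hjx, ← Equiv.Perm.mul_apply, ← pow_add]
    congr 1; exact congrArg (fun e => g ^ e) (by omega)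
  have hyk : (h ^ (k - j)) y = y := by
    have hj1 : k - j = (k - j - 1) + 1 := by omega
    rw [hj1, pow_succ', Equiv.Perm.mul_apply, hy_pow (k - j - 1) (le_refl _)]
    have e1 : g ((g ^ (j + (k - j - 1))) x) = (g ^ k) x := by
      rw [← Equiv.Perm.mul_apply, ← pow_succ']
      congr 1; exact congrArg (fun e => g ^ e) (by omega)
    rw [hh, Equiv.Perm.mul_apply, e1, hgk, swap_apply_left]
  -- orbits
  have horbx : ∀ u, h.SameCycle x u → ∃ i, i < j ∧ (g ^ i) x = u := by
    intro u hu
    obtain ⟨i, hij, hix⟩ := orbit_of_period h x j hj0 hxj u hu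
    exact ⟨i, hij, by rw [← hx_side i (by omega), hix]⟩
  have horby : ∀ u, h.SameCycle y u → ∃ i, i < k - j ∧ (g ^ (j + i)) x = u := by
    intro u hu
    obtain ⟨i, hij, hix⟩ := orbit_of_period h y (k - j) (by omega) hyk u hu
    exact ⟨i, hij, by rw [← hy_pow i (by omega), hix]⟩
  constructor
  · intro hc
    obtain ⟨i, hij, hix⟩ := horbx y hc
    exact hdist i j hij hjk (hix.trans hjx.symm)
  · intro u
    constructor
    · intro hu
      obtain ⟨m, hmk, rfl⟩ := (sameCycle_iff_exists_pow_lt g x u).1 hu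
      rw [← hk] at hmk
      by_cases hmj : m < j
      · exact Or.inl ⟨(m : ℤ), by rw [zpow_natCast, hx_side m (by omega)]⟩
      · refine Or.inr ⟨((m - j : ℕ) : ℤ), ?_⟩
        rw [zpow_natCast, hy_pow (m - j) (by omega)]
        congr 1; exact congrArg (fun e => g ^ e) (by omega)
    · rintro (hu | hu)
      · obtain ⟨i, _, rfl⟩ := horbx u hu
        exact ⟨(i : ℤ), by rw [zpow_natCast]⟩
      · obtain ⟨i, _, rfl⟩ := horby u hu
        exact ⟨((j + i : ℕ) : ℤ), by rw [zpow_natCast]⟩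

theorem merge_sc (hxy : x ≠ y) (hns : ¬ g.SameCycle x y) :
    (swap x y * g).SameCycle x y := by
  set k := osize g x with hk
  clear_value k
  have hgk : (g ^ k) x = x := (pow_apply_eq_self_iff_osize_dvd g x k).2 (by rw [hk])
  have hd : ∀ d, 0 < d → d < k → (g ^ d) x ≠ x := by
    intro d h1 h2 hc
    have h3 := (pow_apply_eq_self_iff_osize_dvd g x d).1 hc
    have h4 := Nat.le_of_dvd h1 h3
    omega
  have hside : ∀ i, i ≤ k - 1 → ((swap x y * g) ^ i) x = (g ^ i) x := by
    refine aux_pow g x y (k - 1) x (fun i hi => ?_)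
    refine swap_apply_of_ne_of_ne (hd (i+1) (by omega) (by omega)) ?_
    exact fun hc => hns ⟨((i + 1 : ℕ) : ℤ), by rw [zpow_natCast]; exact hc⟩
  have hk0 : 0 < k := by rw [hk]; exact osize_pos g x
  refine ⟨(k : ℤ), ?_⟩
  rw [zpow_natCast]
  have hk1 : k = (k - 1) + 1 := by omega
  have e2 : g ((g ^ (k-1)) x) = x := by
    rw [← Equiv.Perm.mul_apply, ← pow_succ', ← hk1, hgk]
  rw [hk1, pow_succ', Equiv.Perm.mul_apply, hside (k-1) (le_refl _),
    Equiv.Perm.mul_apply, e2, swap_apply_left]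

end Core

section Counting

variable {g : Perm α} {x y : α}

lemma block_filter_card (f : Perm α) (S : Finset α) (hS : S.Nonempty)
    (horb : ∀ u ∈ S, OS f u = S) :
    (S.filter fun w => ∃ v, v < w ∧ f.SameCycle w v).card + 1 = S.card := by
  have hfe : S.filter (fun w => ∃ v, v < w ∧ f.SameCycle w v) = S.erase (S.min' hS) := by
    ext w
    simp only [mem_filter, mem_erase]
    constructor
    · rintro ⟨hw, v, hvw, hsc⟩
      refine ⟨fun hwmin => ?_, hw⟩
      have hv : v ∈ S := by
        rw [← horb w hw]; exact mem_OS.2 hsc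
      have h5 := S.min'_le v hv
      rw [← hwmin] at h5
      exact absurd hvw (not_lt.2 h5)
    · rintro ⟨hmin, hw⟩
      refine ⟨hw, S.min' hS, (S.min'_le w hw).lt_of_ne (Ne.symm hmin), ?_⟩
      have h7 : S.min' hS ∈ OS f w := by
        rw [horb w hw]; exact S.min'_mem hS
      exact mem_OS.1 h7
  rw [hfe, card_erase_of_mem (S.min'_mem hS)]
  have := card_pos.2 hS
  omega

lemma cdeg_split {h g : Perm α} {A B : Finset α}
    (hAB : Disjoint A B) (hA : A.Nonempty) (hB : B.Nonempty)
    (hOA : ∀ u ∈ A, OS h u = A) (hOB : ∀ u ∈ B, OS h u = B)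
    (hO : ∀ u ∈ A ∪ B, OS g u = A ∪ B)
    (hout : ∀ u, u ∉ A ∪ B → OS h u = OS g u) :
    cdeg h + 1 = cdeg g := by
  classical
  have key : ∀ f : Perm α,
      cdeg f = ((A ∪ B).filter fun w => ∃ v, v < w ∧ f.SameCycle w v).card
        + ((A ∪ B)ᶜ.filter fun w => ∃ v, v < w ∧ f.SameCycle w v).card := by
    intro f
    rw [cdeg, ← card_union_of_disjoint (disjoint_filter_filter disjoint_compl_right),
      ← filter_union, union_compl]
  have hcompl : ((A ∪ B)ᶜ.filter fun w => ∃ v, v < w ∧ h.SameCycle w v)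
      = ((A ∪ B)ᶜ.filter fun w => ∃ v, v < w ∧ g.SameCycle w v) := by
    apply filter_congr
    intro u hu
    rw [mem_compl] at hu
    have hOSu := hout u hu
    constructor
    · rintro ⟨v, hv, hsc⟩
      exact ⟨v, hv, mem_OS.1 (hOSu ▸ mem_OS.2 hsc)⟩
    · rintro ⟨v, hv, hsc⟩
      exact ⟨v, hv, mem_OS.1 (hOSu.symm ▸ mem_OS.2 hsc)⟩
  have hunion_h : ((A ∪ B).filter fun w => ∃ v, v < w ∧ h.SameCycle w v).card + 2
      = A.card + B.card := by
    rw [filter_union, card_union_of_disjoint (disjoint_filter_filter hAB)]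
    have h1 := block_filter_card h A hA hOA
    have h2 := block_filter_card h B hB hOB
    omega
  have hunion_g : ((A ∪ B).filter fun w => ∃ v, v < w ∧ g.SameCycle w v).card + 1
      = A.card + B.card := by
    have h1 := block_filter_card g (A ∪ B) (hA.mono subset_union_left) hO
    rw [card_union_of_disjoint hAB] at h1
    exact h1
  rw [key h, key g, hcompl]
  omega

lemma fsum_split {h g : Perm α} {A B : Finset α}
    (hAB : Disjoint A B) (hA : A.Nonempty) (hB : B.Nonempty)
    (hOA : ∀ u ∈ A, OS h u = A) (hOB : ∀ u ∈ B, OS h u = B)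
    (hO : ∀ u ∈ A ∪ B, OS g u = A ∪ B)
    (hout : ∀ u, u ∉ A ∪ B → OS h u = OS g u) :
    fsum g = fsum h + 2 * A.card * B.card := by
  classical
  have key : ∀ f : Perm α,
      fsum f = (∑ u ∈ A ∪ B, osize f u) + ∑ u ∈ (A ∪ B)ᶜ, osize f u := by
    intro f
    rw [fsum, ← Finset.sum_add_sum_compl (A ∪ B) (osize f)]
  have hcompl : (∑ u ∈ (A ∪ B)ᶜ, osize h u) = ∑ u ∈ (A ∪ B)ᶜ, osize g u := by
    apply Finset.sum_congr rfl
    intro u hu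
    rw [mem_compl] at hu
    rw [osize, osize, hout u hu]
  have hg_in : (∑ u ∈ A ∪ B, osize g u) = (A.card + B.card) * (A.card + B.card) := by
    have h1 : ∀ u ∈ A ∪ B, osize g u = A.card + B.card := by
      intro u hu
      rw [osize, hO u hu, card_union_of_disjoint hAB]
    rw [Finset.sum_congr rfl h1, Finset.sum_const, card_union_of_disjoint hAB, smul_eq_mul]
  have hh_in : (∑ u ∈ A ∪ B, osize h u) = A.card * A.card + B.card * B.card := by
    rw [Finset.sum_union hAB]
    have h1 : ∀ u ∈ A, osize h u = A.card := fun u hu => by rw [osize, hOA u hu]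
    have h2 : ∀ u ∈ B, osize h u = B.card := fun u hu => by rw [osize, hOB u hu]
    rw [Finset.sum_congr rfl h1, Finset.sum_congr rfl h2, Finset.sum_const,
      Finset.sum_const, smul_eq_mul, smul_eq_mul]
  have hexp : (A.card + B.card) * (A.card + B.card)
      = A.card * A.card + B.card * B.card + 2 * A.card * B.card := by ring
  rw [key g, key h, hcompl, hg_in, hh_in]
  omega

/-- The packaged finset-level consequences of the split lemma. -/
lemma split_package (hxy : x ≠ y) (hsc : g.SameCycle x y) :
    Disjoint (OS (swap x y * g) x) (OS (swap x y * g) y) ∧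
      OS (swap x y * g) x ∪ OS (swap x y * g) y = OS g x ∧
      (∀ u, u ∉ OS g x → OS (swap x y * g) u = OS g u) := by
  obtain ⟨d1, d2⟩ := split_main hxy hsc
  refine ⟨?_, ?_, ?_⟩
  · rw [Finset.disjoint_left]
    intro u hu1 hu2
    exact d1 ((mem_OS.1 hu1).trans (mem_OS.1 hu2).symm)
  · ext u
    rw [mem_union, mem_OS, mem_OS, mem_OS]
    exact (d2 u).symm
  · intro u hu
    ext v
    rw [mem_OS, mem_OS]
    exact sameCycle_swap_mul_outside hsc (fun hc => hu (mem_OS.2 hc)) v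

lemma cdeg_swap_mul_sc (hxy : x ≠ y) (hsc : g.SameCycle x y) :
    cdeg (swap x y * g) + 1 = cdeg g := by
  obtain ⟨hAB, hun, hout⟩ := split_package hxy hsc
  refine cdeg_split hAB ⟨x, self_mem_OS _ x⟩ ⟨y, self_mem_OS _ y⟩
    (fun u hu => OS_eq_of_sameCycle (mem_OS.1 hu))
    (fun u hu => OS_eq_of_sameCycle (mem_OS.1 hu)) ?_ ?_
  · intro u hu
    rw [hun] at hu ⊢
    exact OS_eq_of_sameCycle (mem_OS.1 hu)
  · intro u hu
    rw [hun] at hu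
    exact hout u hu

lemma fsum_swap_mul_sc (hxy : x ≠ y) (hsc : g.SameCycle x y) :
    fsum g = fsum (swap x y * g)
      + 2 * osize (swap x y * g) x * osize (swap x y * g) y := by
  obtain ⟨hAB, hun, hout⟩ := split_package hxy hsc
  refine fsum_split hAB ⟨x, self_mem_OS _ x⟩ ⟨y, self_mem_OS _ y⟩
    (fun u hu => OS_eq_of_sameCycle (mem_OS.1 hu))
    (fun u hu => OS_eq_of_sameCycle (mem_OS.1 hu)) ?_ ?_
  · intro u hu
    rw [hun] at hu ⊢
    exact OS_eq_of_sameCycle (mem_OS.1 hu)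
  · intro u hu
    rw [hun] at hu
    exact hout u hu

lemma cdeg_swap_mul_nsc (hxy : x ≠ y) (hns : ¬ g.SameCycle x y) :
    cdeg (swap x y * g) = cdeg g + 1 := by
  have hsc' := merge_sc hxy hns
  have h1 := cdeg_swap_mul_sc (g := swap x y * g) hxy hsc'
  rw [Equiv.swap_mul_self_mul] at h1
  omega

lemma cdeg_one : cdeg (1 : Perm α) = 0 := by
  rw [cdeg, Finset.card_eq_zero, Finset.filter_eq_empty_iff]
  rintro x - ⟨y, hy, hsc⟩
  rw [Equiv.Perm.sameCycle_one] at hsc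
  exact absurd hsc (ne_of_gt hy)

lemma cdeg_eq_zero_iff {g : Perm α} : cdeg g = 0 ↔ g = 1 := by
  constructor
  · intro h0
    by_contra hg
    obtain ⟨x, hx⟩ : ∃ x, g x ≠ x := by
      by_contra hc
      push_neg at hc
      exact hg (Equiv.ext hc)
    rw [cdeg, Finset.card_eq_zero, Finset.filter_eq_empty_iff] at h0
    rcases lt_or_gt_of_ne hx with hlt | hgt
    · exact h0 (mem_univ x) ⟨g x, hlt, ⟨1, by simp⟩⟩
    · exact h0 (mem_univ (g x)) ⟨x, hgt, Equiv.Perm.SameCycle.symm ⟨1, by simp⟩⟩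
  · rintro rfl
    exact cdeg_one

lemma OS_conj (c g : Perm α) (w : α) :
    OS (c * g * c⁻¹) (c w) = (OS g w).image c := by
  ext v
  rw [mem_OS, Equiv.Perm.sameCycle_conj]
  simp only [mem_image]
  constructor
  · intro h
    refine ⟨c⁻¹ v, ?_, by simp⟩
    rw [mem_OS]
    simpa using h
  · rintro ⟨u, hu, rfl⟩
    simpa using mem_OS.1 hu

lemma osize_conj (c g : Perm α) (w : α) : osize (c * g * c⁻¹) (c w) = osize g w := by
  rw [osize, OS_conj, card_image_of_injective _ c.injective, osize]

lemma fsum_conj (c g : Perm α) : fsum (c * g * c⁻¹) = fsum g := by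
  rw [fsum, fsum]
  exact (Fintype.sum_equiv c (fun w => osize g w) (fun w => osize (c * g * c⁻¹) w)
    (fun w => (osize_conj c g w).symm)).symm

end Counting

section Crux

variable {g : Perm α} {x y : α}

lemma fix_swap_mul_iff (hxy : x ≠ y) (hsc : g.SameCycle x y) (hgnf : ∀ w, g w ≠ w) :
    ∀ w, (swap x y * g) w = w ↔
      ((w = x ∧ osize (swap x y * g) x = 1) ∨ (w = y ∧ osize (swap x y * g) y = 1)) := by
  obtain ⟨hAB, hun, hout⟩ := split_package hxy hsc
  intro w
  constructor
  · intro hw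
    have h1 : osize (swap x y * g) w = 1 := osize_eq_one_iff.2 hw
    by_cases hwO : w ∈ OS g x
    · rw [← hun, mem_union] at hwO
      rcases hwO with hwx | hwy
      · left
        have h2 : OS (swap x y * g) w = OS (swap x y * g) x :=
          OS_eq_of_sameCycle (mem_OS.1 hwx)
        have h3 : x ∈ OS (swap x y * g) w := by
          rw [h2]; exact self_mem_OS _ x
        rw [OS_eq_singleton_of_fixed hw, mem_singleton] at h3
        refine ⟨h3.symm, ?_⟩
        rw [osize, ← h2]; exact h1
      · right
        have h2 : OS (swap x y * g) w = OS (swap x y * g) y :=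
          OS_eq_of_sameCycle (mem_OS.1 hwy)
        have h3 : y ∈ OS (swap x y * g) w := by
          rw [h2]; exact self_mem_OS _ y
        rw [OS_eq_singleton_of_fixed hw, mem_singleton] at h3
        refine ⟨h3.symm, ?_⟩
        rw [osize, ← h2]; exact h1
    · exfalso
      have h2 := hout w hwO
      have h4 : osize g w = 1 := by rw [osize, ← h2]; exact h1
      exact hgnf w (osize_eq_one_iff.1 h4)
  · rintro (⟨rfl, h1⟩ | ⟨rfl, h1⟩) <;> exact osize_eq_one_iff.1 h1

lemma fix_bp_iff (hgnf : ∀ w, g w ≠ w) (z : α) :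
    ∀ w, (swap z (g z) * g) w = w ↔ (w = z ∨ (w = g z ∧ osize g z = 2)) := by
  have hz : g z ≠ z := hgnf z
  have hsc : g.SameCycle z (g z) := ⟨1, by simp⟩
  obtain ⟨hAB, hun, hout⟩ := split_package (Ne.symm hz) hsc
  have hπz : (swap z (g z) * g) z = z := by
    rw [Equiv.Perm.mul_apply, swap_apply_right]
  have hA0 : OS (swap z (g z) * g) z = {z} := OS_eq_singleton_of_fixed hπz
  have ha0 : osize (swap z (g z) * g) z = 1 := by rw [osize, hA0, card_singleton]
  have hcards : osize (swap z (g z) * g) z + osize (swap z (g z) * g) (g z)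
      = osize g z := by
    rw [osize, osize, osize, ← card_union_of_disjoint hAB, hun]
  have hs2 : 2 ≤ osize g z := by
    have h1 := osize_pos g z
    rcases Nat.lt_or_ge (osize g z) 2 with h | h
    · exact absurd (osize_eq_one_iff.1 (by omega)) hz
    · exact h
  intro w
  rw [fix_swap_mul_iff (Ne.symm hz) hsc hgnf w]
  constructor
  · rintro (⟨rfl, _⟩ | ⟨rfl, h1⟩)
    · exact Or.inl rfl
    · exact Or.inr ⟨rfl, by omega⟩
  · rintro (rfl | ⟨rfl, h2⟩)
    · exact Or.inl ⟨rfl, ha0⟩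
    · exact Or.inr ⟨rfl, by omega⟩

lemma crux_core {g g' : Perm α} {z x y : α} (c : Perm α)
    (hgnf : ∀ w, g w ≠ w) (hg'nf : ∀ w, g' w ≠ w)
    (hzmin : ∀ w, osize g z ≤ osize g w)
    (hxy : x ≠ y) (hsc : g'.SameCycle x y)
    (hc : c * (swap z (g z) * g) * c⁻¹ = swap x y * g')
    (hs3 : osize g z ≠ 2) (hczx : c z = x) :
    IsConj g g' ∨ fsum g < fsum g' := by
  have hz : g z ≠ z := hgnf z
  have hscz : g.SameCycle z (g z) := ⟨1, by simp⟩
  obtain ⟨hABz, hunz, houtz⟩ := split_package (Ne.symm hz) hscz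
  have hπz : (swap z (g z) * g) z = z := by
    rw [Equiv.Perm.mul_apply, swap_apply_right]
  have hA0 : OS (swap z (g z) * g) z = {z} := OS_eq_singleton_of_fixed hπz
  have ha0 : osize (swap z (g z) * g) z = 1 := by rw [osize, hA0, card_singleton]
  have hcards : osize (swap z (g z) * g) z + osize (swap z (g z) * g) (g z)
      = osize g z := by
    rw [osize, osize, osize, ← card_union_of_disjoint hABz, hunz]
  have hs2 : 2 ≤ osize g z := by
    have h1 := osize_pos g z
    rcases Nat.lt_or_ge (osize g z) 2 with h | h
    · exact absurd (osize_eq_one_iff.1 (by omega)) hz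
    · exact h
  -- conjugation transport
  have hcw : ∀ w, (swap x y * g') (c w) = c ((swap z (g z) * g) w) := by
    intro w
    rw [← hc]
    simp [Equiv.Perm.mul_apply]
  -- y is not fixed by swap x y * g'
  have hfixy : (swap x y * g') y ≠ y := by
    intro hy
    have h2 := hcw (c⁻¹ y)
    rw [Equiv.Perm.apply_inv_self, hy] at h2
    have h3 : (swap z (g z) * g) (c⁻¹ y) = c⁻¹ y := by
      apply c.injective
      rw [← h2, Equiv.Perm.apply_inv_self]
    rcases (fix_bp_iff hgnf z (c⁻¹ y)).1 h3 with h4 | ⟨_, h5⟩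
    · refine hxy ?_
      rw [← hczx, ← h4, Equiv.Perm.apply_inv_self]
    · exact hs3 h5
  have hb2 : 2 ≤ osize (swap x y * g') y := by
    have h1 := osize_pos (swap x y * g') y
    rcases Nat.lt_or_ge (osize (swap x y * g') y) 2 with h | h
    · exact absurd (osize_eq_one_iff.1 (by omega)) hfixy
    · exact h
  -- the point w corresponding to y
  set w : α := c⁻¹ y with hwdef
  have hcwy : c w = y := Equiv.Perm.apply_inv_self c y
  have hosw : osize (swap x y * g') y = osize (swap z (g z) * g) w := by
    have h9 := osize_conj c (swap z (g z) * g) w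
    rw [hc, hcwy] at h9
    exact h9
  have hwz : w ≠ z := by
    intro h
    rw [h] at hcwy
    rw [hczx] at hcwy
    exact hxy hcwy
  by_cases hwB : w ∈ OS (swap z (g z) * g) (g z)
  · -- conjugacy case
    left
    have hscwgz : (swap z (g z) * g).SameCycle w (g z) := (mem_OS.1 hwB).symm
    obtain ⟨m, _, hm⟩ :=
      (sameCycle_iff_exists_pow_lt (swap z (g z) * g) w (g z)).1 hscwgz
    obtain ⟨P, hP⟩ : ∃ P, P = (swap z (g z) * g) ^ m := ⟨_, rfl⟩
    have hπmz : P z = z := by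
      rw [hP]; exact Equiv.Perm.pow_apply_eq_self_of_apply_eq_self hπz m
    have hmP : P w = g z := by rw [hP]; exact hm
    have e1 : P * swap z w * P⁻¹ = swap z (g z) := by
      rw [← swap_apply_apply, hπmz, hmP]
    have e3 : swap z w = P⁻¹ * swap z (g z) * P := by
      rw [← e1]; group
    have e2 : swap x y = c * swap z w * c⁻¹ := by
      rw [← swap_apply_apply, hczx, hcwy]
    have hcomm : P * (swap z (g z) * g) = (swap z (g z) * g) * P := by
      rw [hP, ← pow_succ, ← pow_succ']
    have hswg : swap z (g z) * (swap z (g z) * g) = g := Equiv.swap_mul_self_mul _ _ _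
    have hg'eq : swap x y * (swap x y * g') = g' := Equiv.swap_mul_self_mul _ _ _
    refine isConj_iff.2 ⟨c * P⁻¹, ?_⟩
    have key : g' = (c * P⁻¹) * g * (c * P⁻¹)⁻¹ := by
      calc g' = swap x y * (swap x y * g') := hg'eq.symm
        _ = swap x y * (c * (swap z (g z) * g) * c⁻¹) := by rw [hc]
        _ = (c * swap z w * c⁻¹) * (c * (swap z (g z) * g) * c⁻¹) := by rw [← e2]
        _ = c * (swap z w * (swap z (g z) * g)) * c⁻¹ := by group
        _ = c * ((P⁻¹ * swap z (g z) * P) * (swap z (g z) * g)) * c⁻¹ := by rw [← e3]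
        _ = c * (P⁻¹ * swap z (g z) * (P * (swap z (g z) * g))) * c⁻¹ := by
              simp only [mul_assoc]
        _ = c * (P⁻¹ * swap z (g z) * ((swap z (g z) * g) * P)) * c⁻¹ := by rw [hcomm]
        _ = c * (P⁻¹ * (swap z (g z) * (swap z (g z) * g)) * P) * c⁻¹ := by
              simp only [mul_assoc]
        _ = c * (P⁻¹ * g * P) * c⁻¹ := by rw [hswg]
        _ = (c * P⁻¹) * g * (c * P⁻¹)⁻¹ := by group
    exact key.symm
  · -- measure case
    right
    have hwOut : w ∉ OS g z := by
      rw [← hunz, mem_union]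
      rintro (h1 | h2)
      · rw [hA0, mem_singleton] at h1
        exact hwz h1
      · exact hwB h2
    have hOSw : OS (swap z (g z) * g) w = OS g w := houtz w hwOut
    have hgw : osize g w = osize (swap x y * g') y := by
      rw [osize, ← hOSw, ← osize, ← hosw]
    have hmin := hzmin w
    have hfixx : (swap x y * g') x = x := by
      have h8 := hcw z
      rw [hπz, hczx] at h8
      exact h8
    have ha1 : osize (swap x y * g') x = 1 := osize_eq_one_iff.2 hfixx
    have hfsg : fsum g = fsum (swap z (g z) * g)
        + 2 * osize (swap z (g z) * g) z * osize (swap z (g z) * g) (g z) :=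
      fsum_swap_mul_sc (Ne.symm hz) hscz
    have hfsg' : fsum g' = fsum (swap x y * g')
        + 2 * osize (swap x y * g') x * osize (swap x y * g') y :=
      fsum_swap_mul_sc hxy hsc
    have hfsππ' : fsum (swap x y * g') = fsum (swap z (g z) * g) := by
      rw [← hc, fsum_conj]
    rw [ha0] at hfsg
    rw [ha1] at hfsg'
    omega

theorem crux {g g' : Perm α} {z x y : α}
    (hgnf : ∀ w, g w ≠ w) (hg'nf : ∀ w, g' w ≠ w)
    (hzmin : ∀ w, osize g z ≤ osize g w)
    (hxy : x ≠ y) (hsc : g'.SameCycle x y)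
    (hconj : IsConj (swap z (g z) * g) (swap x y * g')) :
    IsConj g g' ∨ fsum g < fsum g' := by
  obtain ⟨c, hc⟩ := isConj_iff.1 hconj
  have hz : g z ≠ z := hgnf z
  have hπz : (swap z (g z) * g) z = z := by
    rw [Equiv.Perm.mul_apply, swap_apply_right]
  have hcw : ∀ w, (swap x y * g') (c w) = c ((swap z (g z) * g) w) := by
    intro w
    rw [← hc]
    simp [Equiv.Perm.mul_apply]
  have hfix_cz : (swap x y * g') (c z) = c z := by rw [hcw z, hπz]
  have hloc := (fix_swap_mul_iff hxy hsc hg'nf (c z)).1 hfix_cz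
  by_cases hs : osize g z = 2
  · -- minimal orbit has size 2 : always conjugate
    have hgz_fix : (swap z (g z) * g) (g z) = g z :=
      (fix_bp_iff hgnf z (g z)).2 (Or.inr ⟨rfl, hs⟩)
    have hfix_cgz : (swap x y * g') (c (g z)) = c (g z) := by rw [hcw (g z), hgz_fix]
    have hloc2 := (fix_swap_mul_iff hxy hsc hg'nf (c (g z))).1 hfix_cgz
    have hne : c z ≠ c (g z) := fun h => hz (c.injective h).symm
    have hswap : swap x y = swap (c z) (c (g z)) := by
      rcases hloc with ⟨h1, _⟩ | ⟨h1, _⟩ <;> rcases hloc2 with ⟨h2, _⟩ | ⟨h2, _⟩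
      · exact absurd (h1.trans h2.symm) hne
      · rw [h1, h2]
      · rw [h1, h2, swap_comm]
      · exact absurd (h1.trans h2.symm) hne
    left
    refine isConj_iff.2 ⟨c, ?_⟩
    have hswg : swap z (g z) * (swap z (g z) * g) = g := Equiv.swap_mul_self_mul _ _ _
    have hg'eq : swap x y * (swap x y * g') = g' := Equiv.swap_mul_self_mul _ _ _
    calc c * g * c⁻¹ = c * (swap z (g z) * (swap z (g z) * g)) * c⁻¹ := by rw [hswg]
      _ = (c * swap z (g z) * c⁻¹) * (c * (swap z (g z) * g) * c⁻¹) := by group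
      _ = swap (c z) (c (g z)) * (swap x y * g') := by rw [← swap_apply_apply, hc]
      _ = swap x y * (swap x y * g') := by rw [← hswap]
      _ = g' := hg'eq
  · rcases hloc with ⟨h1, _⟩ | ⟨h1, _⟩
    · exact crux_core c hgnf hg'nf hzmin hxy hsc hc hs h1
    · have hc' : c * (swap z (g z) * g) * c⁻¹ = swap y x * g' := by
        rw [swap_comm y x]; exact hc
      exact crux_core c hgnf hg'nf hzmin (Ne.symm hxy) hsc.symm hc' hs h1

end Crux

section PermDeg

variable {N : ℕ}

lemma exists_swaplist : ∀ (n : ℕ) (g : Perm (Fin N)), cdeg g = n →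
    ∃ l : List (Perm (Fin N)), (∀ t ∈ l, t.IsSwap) ∧ l.prod = g ∧ l.length = n := by
  intro n
  induction n with
  | zero =>
    intro g hg
    exact ⟨[], by simp, by simp [(cdeg_eq_zero_iff.1 hg).symm], rfl⟩
  | succ n ih =>
    intro g hg
    have hg1 : g ≠ 1 := by
      intro h
      rw [h, cdeg_one] at hg
      omega
    obtain ⟨x, hx⟩ : ∃ x, g x ≠ x := by
      by_contra hcon
      push_neg at hcon
      exact hg1 (Equiv.ext hcon)
    have hsc : g.SameCycle x (g x) := ⟨1, by simp⟩
    have hxne : x ≠ g x := Ne.symm hx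
    have h1 := cdeg_swap_mul_sc hxne hsc
    obtain ⟨l, hl1, hl2, hl3⟩ := ih (swap x (g x) * g) (by omega)
    refine ⟨swap x (g x) :: l, ?_, ?_, by simp [hl3]⟩
    · intro t ht
      rcases List.mem_cons.1 ht with rfl | ht'
      · exact ⟨x, g x, hxne, rfl⟩
      · exact hl1 t ht'
    · rw [List.prod_cons, hl2, Equiv.swap_mul_self_mul]

lemma cdeg_prod_le : ∀ l : List (Perm (Fin N)), (∀ t ∈ l, t.IsSwap) →
    cdeg l.prod ≤ l.length := by
  intro l
  induction l with
  | nil => intro _; simp [cdeg_one]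
  | cons t l ih =>
    intro hl
    obtain ⟨x, y, hxy, rfl⟩ := hl t List.mem_cons_self
    have hrest := ih (fun s hs => hl s (List.mem_cons_of_mem _ hs))
    rw [List.prod_cons]
    by_cases hsc : (l.prod).SameCycle x y
    · have h2 := cdeg_swap_mul_sc hxy hsc
      simp only [List.length_cons]
      omega
    · have h2 := cdeg_swap_mul_nsc hxy hsc
      simp only [List.length_cons]
      omega

theorem permDeg_eq_cdeg (g : Perm (Fin N)) : permDeg g = cdeg g := by
  obtain ⟨l, hl1, hl2, hl3⟩ := exists_swaplist (cdeg g) g rfl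
  have hmem : cdeg g ∈ {d | ∃ l : List (Perm (Fin N)),
      (∀ t ∈ l, t.IsSwap) ∧ l.prod = g ∧ l.length = d} := ⟨l, hl1, hl2, hl3⟩
  apply le_antisymm
  · exact Nat.sInf_le hmem
  · obtain ⟨l', h1', h2', h3'⟩ := Nat.sInf_mem (Set.nonempty_of_mem hmem)
    calc cdeg g = cdeg l'.prod := by rw [h2']
      _ ≤ l'.length := cdeg_prod_le l' h1'
      _ = permDeg g := h3'

theorem permDeg_split {g : Perm (Fin N)} {x y : Fin N} (hxy : x ≠ y)
    (hsc : g.SameCycle x y) : permDeg (swap x y * g) + 1 = permDeg g := by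
  rw [permDeg_eq_cdeg, permDeg_eq_cdeg]
  exact cdeg_swap_mul_sc hxy hsc

theorem permDeg_merge {g : Perm (Fin N)} {x y : Fin N} (hxy : x ≠ y)
    (hns : ¬ g.SameCycle x y) : permDeg (swap x y * g) = permDeg g + 1 := by
  rw [permDeg_eq_cdeg, permDeg_eq_cdeg]
  exact cdeg_swap_mul_nsc hxy hns

theorem permDeg_one : permDeg (1 : Perm (Fin N)) = 0 := by
  rw [permDeg_eq_cdeg, cdeg_one]

theorem permDeg_swap {x y : Fin N} (hxy : x ≠ y) : permDeg (swap x y) = 1 := by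
  have h1 : ¬ (1 : Perm (Fin N)).SameCycle x y := by
    rw [Equiv.Perm.sameCycle_one]
    exact hxy
  have h2 := permDeg_merge hxy h1
  rw [mul_one, permDeg_one] at h2
  exact h2

theorem cup_cond {π : Perm (Fin N)} {x y : Fin N} (hxy : x ≠ y) :
    (permDeg (swap x y) + permDeg π = permDeg (swap x y * π))
      ↔ (swap x y * π).SameCycle x y := by
  rw [permDeg_swap hxy]
  by_cases hsc : π.SameCycle x y
  · have h1 := permDeg_split hxy hsc
    have h2 := (split_main hxy hsc).1
    exact ⟨fun h => by omega, fun h => absurd h h2⟩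
  · have h1 := permDeg_merge hxy hsc
    have h2 := merge_sc hxy hsc
    exact ⟨fun _ => h2, fun _ => by omega⟩

lemma prod_map_conj (c : Perm (Fin N)) : ∀ l : List (Perm (Fin N)),
    (l.map (fun s => c * s * c⁻¹)).prod = c * l.prod * c⁻¹ := by
  intro l
  induction l with
  | nil => simp
  | cons s l ihl =>
    rw [List.map_cons, List.prod_cons, List.prod_cons, ihl]
    group

lemma mem_degSet_conj {d : ℕ} (c : Perm (Fin N)) {g : Perm (Fin N)}
    (h : ∃ l : List (Perm (Fin N)), (∀ t ∈ l, t.IsSwap) ∧ l.prod = g ∧ l.length = d) :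
    ∃ l : List (Perm (Fin N)), (∀ t ∈ l, t.IsSwap) ∧ l.prod = c * g * c⁻¹ ∧ l.length = d := by
  obtain ⟨l, h1, h2, h3⟩ := h
  refine ⟨l.map (fun s => c * s * c⁻¹), ?_, ?_, by simp [h3]⟩
  · intro t ht
    simp only [List.mem_map] at ht
    obtain ⟨s, hs, rfl⟩ := ht
    obtain ⟨a, b, hab, rfl⟩ := h1 s hs
    exact ⟨c a, c b, fun hcc => hab (c.injective hcc), (swap_apply_apply c a b).symm⟩
  · rw [prod_map_conj, h2]

lemma degSet_nonempty (g : Perm (Fin N)) :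
    (cdeg g) ∈ {d | ∃ l : List (Perm (Fin N)),
      (∀ t ∈ l, t.IsSwap) ∧ l.prod = g ∧ l.length = d} :=
  exists_swaplist (cdeg g) g rfl

theorem permDeg_conj (c g : Perm (Fin N)) : permDeg (c * g * c⁻¹) = permDeg g := by
  apply le_antisymm
  · have h0 := Nat.sInf_mem (Set.nonempty_of_mem (degSet_nonempty g))
    exact Nat.sInf_le (mem_degSet_conj c h0)
  · have h0 := Nat.sInf_mem (Set.nonempty_of_mem (degSet_nonempty (c * g * c⁻¹)))
    have h5 := mem_degSet_conj c⁻¹ h0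
    have h6 : c⁻¹ * (c * g * c⁻¹) * c⁻¹⁻¹ = g := by group
    rw [h6] at h5
    exact Nat.sInf_le h5

end PermDeg

section Algebra

open scoped Classical

variable {N : ℕ} {n : ℕ}

lemma tau_apply (N : ℕ) (u : Equiv.Perm (Fin N)) :
    tau N u = if u.IsSwap then 1 else 0 := by
  classical
  unfold tau
  simp only [MonoidAlgebra.coeff_sum, MonoidAlgebra.coeff_single]
  rw [Finset.sum_apply']
  rw [Finset.sum_congr rfl (fun σ _ => Finsupp.single_apply)]
  rw [Finset.sum_ite_eq' _ u (fun _ => (1 : ℚ))]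
  simp [Finset.mem_filter]

lemma inner_sum_apply (σ : Perm (Fin N)) (cσ : ℚ)
    (a : MonoidAlgebra ℚ (Perm (Fin N))) (u : Perm (Fin N)) :
    (a.coeff.sum fun π b => if permDeg σ + permDeg π = permDeg (σ * π)
        then MonoidAlgebra.single (σ * π) (cσ * b) else 0) u
      = if permDeg σ + permDeg (σ⁻¹ * u) = permDeg u then cσ * a (σ⁻¹ * u) else 0 := by
  classical
  rw [MonoidAlgebra.coeff_finsuppSum, Finsupp.sum_apply, Finsupp.sum]
  have hterm : ∀ π : Perm (Fin N),
      ((if permDeg σ + permDeg π = permDeg (σ * π)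
        then MonoidAlgebra.single (σ * π) (cσ * a π) else 0) :
          MonoidAlgebra ℚ (Perm (Fin N))) u
      = if π = σ⁻¹ * u then
          (if permDeg σ + permDeg (σ⁻¹ * u) = permDeg u
            then cσ * a (σ⁻¹ * u) else 0) else 0 := by
    intro π
    by_cases hπ : π = σ⁻¹ * u
    · subst hπ
      have hσπ : σ * (σ⁻¹ * u) = u := by group
      rw [hσπ, if_pos rfl]
      by_cases hcond : permDeg σ + permDeg (σ⁻¹ * u) = permDeg u
      · rw [if_pos hcond, if_pos hcond, MonoidAlgebra.single_apply, if_pos rfl]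
      · rw [if_neg hcond, if_neg hcond]
        simp
    · rw [if_neg hπ]
      by_cases hcond : permDeg σ + permDeg π = permDeg (σ * π)
      · rw [if_pos hcond, MonoidAlgebra.single_apply, if_neg]
        intro hc
        exact hπ (by rw [← hc]; group)
      · rw [if_neg hcond]
        simp
  rw [Finset.sum_congr rfl (fun π _ => hterm π)]
  have hext : (∑ π ∈ a.coeff.support, if π = σ⁻¹ * u then
        (if permDeg σ + permDeg (σ⁻¹ * u) = permDeg u
          then cσ * a (σ⁻¹ * u) else 0) else 0)
      = ∑ π : Perm (Fin N), if π = σ⁻¹ * u then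
        (if permDeg σ + permDeg (σ⁻¹ * u) = permDeg u
          then cσ * a (σ⁻¹ * u) else 0) else 0 := by
    refine Finset.sum_subset (subset_univ _) ?_
    intro π _ hπ
    by_cases hπ2 : π = σ⁻¹ * u
    · subst hπ2
      rw [if_pos rfl, Finsupp.notMem_support_iff.1 hπ, mul_zero]
      simp
    · rw [if_neg hπ2]
  rw [hext, Finset.sum_ite_eq' _ (σ⁻¹ * u) _]
  simp

lemma cup_apply (f a : MonoidAlgebra ℚ (Perm (Fin N))) (u : Perm (Fin N)) :
    (cup f a) u = ∑ σ : Perm (Fin N),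
      (if permDeg σ + permDeg (σ⁻¹ * u) = permDeg u then f σ * a (σ⁻¹ * u) else 0) := by
  rw [cup, MonoidAlgebra.coeff_finsuppSum, Finsupp.sum_apply, Finsupp.sum]
  rw [Finset.sum_congr rfl (fun σ _ => inner_sum_apply σ (f σ) a u)]
  refine Finset.sum_subset (subset_univ _) ?_
  intro σ _ hσ
  rw [Finsupp.notMem_support_iff.1 hσ]
  simp

lemma cup_tau_apply (a : MonoidAlgebra ℚ (Perm (Fin N))) (u : Perm (Fin N)) :
    (cup (tau N) a) u = ∑ σ : Perm (Fin N),
      (if σ.IsSwap ∧ permDeg σ + permDeg (σ⁻¹ * u) = permDeg u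
        then a (σ⁻¹ * u) else 0) := by
  classical
  rw [cup_apply]
  apply Finset.sum_congr rfl
  intro σ _
  rw [tau_apply]
  by_cases h1 : σ.IsSwap <;> by_cases h2 : permDeg σ + permDeg (σ⁻¹ * u) = permDeg u <;>
    simp [h1, h2]

end Algebra

section Algebra2

open scoped Classical

variable {N : ℕ} {n : ℕ}

lemma isClassFun_zero : IsClassFun (0 : MonoidAlgebra ℚ (Perm (Fin N))) :=
  fun _ _ => rfl

lemma isClassFun_add {a b : MonoidAlgebra ℚ (Perm (Fin N))}
    (ha : IsClassFun a) (hb : IsClassFun b) : IsClassFun (a + b) := by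
  intro σ π
  show a (σ * π * σ⁻¹) + b (σ * π * σ⁻¹) = a π + b π
  rw [ha σ π, hb σ π]

lemma isClassFun_smul {a : MonoidAlgebra ℚ (Perm (Fin N))} (q : ℚ)
    (ha : IsClassFun a) : IsClassFun (q • a) := by
  intro σ π
  show q • a (σ * π * σ⁻¹) = q • a π
  rw [ha σ π]

lemma classFun_eq_of_isConj {F : MonoidAlgebra ℚ (Perm (Fin N))} (hF : IsClassFun F)
    {u v : Perm (Fin N)} (h : IsConj u v) : F u = F v := by
  obtain ⟨c, hc⟩ := isConj_iff.1 h
  rw [← hc]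
  exact (hF c u).symm

def cls (ρ : Perm (Fin N)) : Finset (Perm (Fin N)) := univ.filter fun u => IsConj ρ u

def cInd (ρ : Perm (Fin N)) : MonoidAlgebra ℚ (Perm (Fin N)) :=
  ∑ u ∈ cls ρ, MonoidAlgebra.single u 1

def csize (ρ : Perm (Fin N)) : ℕ := (cls ρ).card

lemma mem_cls {ρ u : Perm (Fin N)} : u ∈ cls ρ ↔ IsConj ρ u := by
  unfold cls
  simp

lemma cInd_apply (ρ u : Perm (Fin N)) : cInd ρ u = if IsConj ρ u then 1 else 0 := by
  unfold cInd
  simp only [MonoidAlgebra.coeff_sum, MonoidAlgebra.coeff_single]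
  rw [Finset.sum_apply']
  rw [Finset.sum_congr rfl (fun σ _ => Finsupp.single_apply)]
  rw [Finset.sum_ite_eq' _ u (fun _ => (1 : ℚ))]
  simp [mem_cls]

lemma isClassFun_cInd (ρ : Perm (Fin N)) : IsClassFun (cInd ρ) := by
  intro σ π
  rw [cInd_apply, cInd_apply]
  have h1 : IsConj π (σ * π * σ⁻¹) := isConj_iff.2 ⟨σ, rfl⟩
  by_cases h : IsConj ρ π
  · rw [if_pos h, if_pos (h.trans h1)]
  · rw [if_neg h, if_neg (fun hc => h (hc.trans h1.symm))]

lemma cls_eq_of_isConj {ρ ρ' : Perm (Fin N)} (h : IsConj ρ ρ') : cls ρ = cls ρ' := by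
  ext u
  rw [mem_cls, mem_cls]
  exact ⟨fun h1 => h.symm.trans h1, fun h1 => h.trans h1⟩

lemma cInd_eq_of_isConj {ρ ρ' : Perm (Fin N)} (h : IsConj ρ ρ') : cInd ρ = cInd ρ' := by
  unfold cInd
  rw [cls_eq_of_isConj h]

lemma csize_eq_of_isConj {ρ ρ' : Perm (Fin N)} (h : IsConj ρ ρ') : csize ρ = csize ρ' := by
  unfold csize
  rw [cls_eq_of_isConj h]

lemma csize_pos (ρ : Perm (Fin N)) : 0 < csize ρ :=
  card_pos.2 ⟨ρ, mem_cls.2 (IsConj.refl ρ)⟩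

lemma regroup (F : MonoidAlgebra ℚ (Perm (Fin N))) (hF : IsClassFun F) :
    F = ∑ u : Perm (Fin N), (F u / (csize u : ℚ)) • cInd u := by
  ext v
  rw [MonoidAlgebra.coeff_sum, Finset.sum_apply']
  have h1 : ∀ u : Perm (Fin N), ((F u / (csize u : ℚ)) • cInd u) v
      = if IsConj u v then F u / (csize u : ℚ) else 0 := by
    intro u
    rw [MonoidAlgebra.coeff_smul_apply, cInd_apply, smul_eq_mul]
    by_cases h : IsConj u v <;> simp [h]
  rw [Finset.sum_congr rfl (fun u _ => h1 u)]
  rw [← Finset.sum_filter]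
  have h2 : ∀ u ∈ univ.filter (fun u => IsConj u v),
      F u / (csize u : ℚ) = F v / (csize v : ℚ) := by
    intro u hu
    rw [Finset.mem_filter] at hu
    rw [classFun_eq_of_isConj hF hu.2, csize_eq_of_isConj hu.2]
  rw [Finset.sum_congr rfl h2, Finset.sum_const]
  have h3 : (univ.filter (fun u => IsConj u v)) = cls v := by
    ext u
    rw [Finset.mem_filter, mem_cls]
    exact ⟨fun h => h.2.symm, fun h => ⟨mem_univ u, h.symm⟩⟩
  rw [h3]
  have h4 : ((csize v : ℚ)) ≠ 0 := by
    have := csize_pos v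
    positivity
  rw [nsmul_eq_mul, ← mul_div_assoc]
  unfold csize at h4
  exact (mul_div_cancel_left₀ (F v) h4).symm

lemma cup_zero_right (f : MonoidAlgebra ℚ (Perm (Fin N))) : cup f 0 = 0 := by
  unfold cup
  simp [Finsupp.sum_zero_index, Finsupp.sum]

lemma cup_add_right (f a b : MonoidAlgebra ℚ (Perm (Fin N))) :
    cup f (a + b) = cup f a + cup f b := by
  unfold cup
  rw [← Finsupp.sum_add]
  apply Finsupp.sum_congr
  intro σ _
  rw [MonoidAlgebra.coeff_add, Finsupp.sum_add_index']
  · intro π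
    simp
  · intro π b₁ b₂
    split_ifs with h
    · rw [mul_add, MonoidAlgebra.single_add]
    · rw [add_zero]

lemma cup_smul_right (f a : MonoidAlgebra ℚ (Perm (Fin N))) (q : ℚ) :
    cup f (q • a) = q • cup f a := by
  unfold cup
  rw [Finsupp.smul_sum]
  apply Finsupp.sum_congr
  intro σ _
  rw [MonoidAlgebra.coeff_smul, Finsupp.sum_smul_index' (h := fun π b =>
    if permDeg σ + permDeg π = permDeg (σ * π)
      then MonoidAlgebra.single (σ * π) (f σ * b) else 0)]
  · rw [Finsupp.smul_sum]
    apply Finsupp.sum_congr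
    intro π _
    split_ifs with h
    · rw [MonoidAlgebra.smul_single', smul_eq_mul, mul_left_comm]
    · rw [smul_zero]
  · intro π
    simp

lemma iota_add (a b : MonoidAlgebra ℚ (Perm (Fin n))) :
    iota n (a + b) = iota n a + iota n b := congrArg MonoidAlgebra.ofCoeff Finsupp.mapDomain_add

lemma iota_smul (q : ℚ) (a : MonoidAlgebra ℚ (Perm (Fin n))) :
    iota n (q • a) = q • iota n a := congrArg MonoidAlgebra.ofCoeff (Finsupp.mapDomain_smul q a.coeff)

lemma iota_zero : iota n (0 : MonoidAlgebra ℚ (Perm (Fin n))) = 0 :=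
  congrArg MonoidAlgebra.ofCoeff Finsupp.mapDomain_zero

lemma r1_add (a b : MonoidAlgebra ℚ (Perm (Fin n))) :
    r1 n (a + b) = r1 n a + r1 n b := by
  unfold r1
  rw [iota_add, ← smul_add, ← Finset.sum_add_distrib]
  congr 1
  apply Finset.sum_congr rfl
  intro t _
  rw [mul_add, add_mul]

lemma r1_smul (q : ℚ) (a : MonoidAlgebra ℚ (Perm (Fin n))) :
    r1 n (q • a) = q • r1 n a := by
  unfold r1
  rw [iota_smul, smul_comm]
  congr 1
  rw [Finset.smul_sum]
  apply Finset.sum_congr rfl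
  intro t _
  rw [mul_smul_comm, smul_mul_assoc]

lemma r1_zero : r1 n (0 : MonoidAlgebra ℚ (Perm (Fin n))) = 0 := by
  unfold r1
  rw [iota_zero]
  simp

def Wset (n : ℕ) : Submodule ℚ (MonoidAlgebra ℚ (Perm (Fin (n + 1)))) where
  carrier := {w | ∃ a b, IsClassFun a ∧ IsClassFun b ∧ w = cup (tau (n + 1)) a + r1 n b}
  add_mem' := by
    rintro x y ⟨a1, b1, h1, h2, rfl⟩ ⟨a2, b2, h3, h4, rfl⟩
    refine ⟨a1 + a2, b1 + b2, isClassFun_add h1 h3, isClassFun_add h2 h4, ?_⟩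
    rw [cup_add_right, r1_add]
    abel
  zero_mem' := ⟨0, 0, isClassFun_zero, isClassFun_zero, by
    rw [cup_zero_right, r1_zero, add_zero]⟩
  smul_mem' := by
    rintro q x ⟨a, b, h1, h2, rfl⟩
    refine ⟨q • a, q • b, isClassFun_smul q h1, isClassFun_smul q h2, ?_⟩
    rw [cup_smul_right, r1_smul, smul_add]

end Algebra2

section R1

open scoped Classical

variable {n : ℕ} {N : ℕ}

lemma iotaPerm_apply_castSucc (π : Perm (Fin n)) (x : Fin n) :
    iotaPerm n π x.castSucc = (π x).castSucc := by
  unfold iotaPerm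
  exact Equiv.Perm.viaFintypeEmbedding_apply_image π Fin.castSuccEmb x

lemma iotaPerm_apply_last (π : Perm (Fin n)) :
    iotaPerm n π (Fin.last n) = Fin.last n := by
  unfold iotaPerm
  apply Equiv.Perm.viaFintypeEmbedding_apply_notMem_range
  rintro ⟨x, hx⟩
  exact absurd hx (Fin.castSucc_lt_last x).ne

lemma iotaPerm_mul (σ τ : Perm (Fin n)) :
    iotaPerm n (σ * τ) = iotaPerm n σ * iotaPerm n τ := by
  ext u
  refine Fin.lastCases ?_ ?_ u
  · rw [Equiv.Perm.mul_apply, iotaPerm_apply_last, iotaPerm_apply_last, iotaPerm_apply_last]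
  · intro x
    rw [Equiv.Perm.mul_apply, iotaPerm_apply_castSucc, iotaPerm_apply_castSucc,
      iotaPerm_apply_castSucc, Equiv.Perm.mul_apply]

lemma iotaPerm_one : iotaPerm n 1 = 1 := by
  ext u
  refine Fin.lastCases ?_ ?_ u
  · rw [iotaPerm_apply_last]; rfl
  · intro x
    rw [iotaPerm_apply_castSucc]; rfl

lemma iotaPerm_inv (σ : Perm (Fin n)) : iotaPerm n σ⁻¹ = (iotaPerm n σ)⁻¹ := by
  have h1 : iotaPerm n σ * iotaPerm n σ⁻¹ = 1 := by
    rw [← iotaPerm_mul, mul_inv_cancel, iotaPerm_one]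
  exact (inv_eq_of_mul_eq_one_right h1).symm

lemma iotaPerm_injective : Function.Injective (iotaPerm n) := by
  intro σ τ h
  apply Equiv.ext
  intro x
  have h2 := congrArg (fun p : Perm (Fin (n+1)) => p x.castSucc) h
  simp only [iotaPerm_apply_castSucc] at h2
  exact Fin.castSucc_injective n h2

lemma exists_iotaPerm_eq {g₀ : Perm (Fin (n+1))} (h : g₀ (Fin.last n) = Fin.last n) :
    ∃ h₁ : Perm (Fin n), iotaPerm n h₁ = g₀ := by
  have hne : ∀ x : Fin n, g₀ x.castSucc ≠ Fin.last n := by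
    intro x hc
    have h2 := g₀.injective (hc.trans h.symm)
    exact absurd h2 (Fin.castSucc_lt_last x).ne
  have hne' : ∀ x : Fin n, g₀⁻¹ x.castSucc ≠ Fin.last n := by
    intro x hc
    have h2 : x.castSucc = g₀ (Fin.last n) := by rw [← hc, Equiv.Perm.apply_inv_self]
    rw [h] at h2
    exact absurd h2 (Fin.castSucc_lt_last x).ne
  refine ⟨⟨fun x => (g₀ x.castSucc).castPred (hne x),
          fun x => (g₀⁻¹ x.castSucc).castPred (hne' x), ?_, ?_⟩, ?_⟩
  · intro x
    simp [Fin.castSucc_castPred]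
  · intro x
    simp [Fin.castSucc_castPred]
  · apply Equiv.ext
    intro u
    refine Fin.lastCases ?_ ?_ u
    · rw [iotaPerm_apply_last, h]
    · intro x
      rw [iotaPerm_apply_castSucc]
      show ((g₀ x.castSucc).castPred (hne x)).castSucc = g₀ x.castSucc
      exact Fin.castSucc_castPred _ _

lemma single_conj_apply (t : Perm (Fin (n+1))) (w : MonoidAlgebra ℚ (Perm (Fin (n+1))))
    (u : Perm (Fin (n+1))) :
    ((MonoidAlgebra.single t 1 * w * MonoidAlgebra.single t⁻¹ 1 :
      MonoidAlgebra ℚ (Perm (Fin (n+1))))).coeff u = w (t⁻¹ * u * t) := by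
  rw [MonoidAlgebra.mul_single_apply, MonoidAlgebra.single_mul_apply]
  rw [inv_inv, one_mul, mul_one, mul_assoc]

lemma r1_apply (x : MonoidAlgebra ℚ (Perm (Fin n))) (u : Perm (Fin (n+1))) :
    (r1 n x) u = (n.factorial : ℚ)⁻¹
      * ∑ t : Perm (Fin (n+1)), (iota n x) (t⁻¹ * u * t) := by
  unfold r1
  rw [MonoidAlgebra.coeff_smul_apply, MonoidAlgebra.coeff_sum, Finset.sum_apply', smul_eq_mul]
  congr 1
  exact Finset.sum_congr rfl fun t _ => single_conj_apply t (iota n x) u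

lemma isClassFun_r1 (x : MonoidAlgebra ℚ (Perm (Fin n))) : IsClassFun (r1 n x) := by
  intro σ u
  rw [r1_apply, r1_apply]
  congr 1
  rw [← Equiv.sum_comp (Equiv.mulLeft σ)
    (fun t => (iota n x) (t⁻¹ * (σ * u * σ⁻¹) * t))]
  apply Finset.sum_congr rfl
  intro t _
  have h1 : (Equiv.mulLeft σ) t = σ * t := rfl
  rw [h1]
  congr 1
  group

lemma iota_apply_iotaPerm (b : MonoidAlgebra ℚ (Perm (Fin n))) (σ : Perm (Fin n)) :
    (iota n b) (iotaPerm n σ) = b σ :=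
  Finsupp.mapDomain_apply iotaPerm_injective b.coeff σ

lemma iota_apply_notin (b : MonoidAlgebra ℚ (Perm (Fin n))) {w : Perm (Fin (n+1))}
    (hw : w ∉ Set.range (iotaPerm n)) : (iota n b) w = 0 :=
  Finsupp.mapDomain_notin_range b.coeff w hw

lemma iota_nonneg (b : MonoidAlgebra ℚ (Perm (Fin n))) (hb : ∀ σ, 0 ≤ b σ)
    (w : Perm (Fin (n+1))) : 0 ≤ (iota n b) w := by
  by_cases hw : w ∈ Set.range (iotaPerm n)
  · obtain ⟨σ, rfl⟩ := hw
    rw [iota_apply_iotaPerm]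
    exact hb σ
  · rw [iota_apply_notin b hw]

lemma collapse (F : MonoidAlgebra ℚ (Perm (Fin N))) (hF : IsClassFun F)
    (ρ : Perm (Fin N)) (hsupp : ∀ u, F u ≠ 0 → IsConj ρ u) :
    F = (F ρ) • cInd ρ := by
  conv_lhs => rw [regroup F hF]
  rw [← Finset.sum_filter_add_sum_filter_not univ (fun u => IsConj ρ u)]
  have hz : (∑ u ∈ univ.filter (fun u => ¬ IsConj ρ u),
      (F u / (csize u : ℚ)) • cInd u) = 0 := by
    apply Finset.sum_eq_zero
    intro u hu
    rw [Finset.mem_filter] at hu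
    have h1 : F u = 0 := by
      by_contra hc
      exact hu.2 (hsupp u hc)
    rw [h1, zero_div, zero_smul]
  have hc : (∑ u ∈ univ.filter (fun u => IsConj ρ u),
      (F u / (csize u : ℚ)) • cInd u)
      = (csize ρ) • ((F ρ / (csize ρ : ℚ)) • cInd ρ) := by
    have hterm : ∀ u ∈ univ.filter (fun u => IsConj ρ u),
        (F u / (csize u : ℚ)) • cInd u = (F ρ / (csize ρ : ℚ)) • cInd ρ := by
      intro u hu
      rw [Finset.mem_filter] at hu
      rw [classFun_eq_of_isConj hF hu.2.symm, csize_eq_of_isConj hu.2.symm,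
        cInd_eq_of_isConj hu.2.symm]
    rw [Finset.sum_congr rfl hterm, Finset.sum_const]
    have hcard : (univ.filter fun u => IsConj ρ u).card = csize ρ := rfl
    rw [hcard]
  rw [hz, hc, add_zero]
  rw [← Nat.cast_smul_eq_nsmul ℚ, smul_smul]
  congr 1
  have h4 : ((csize ρ : ℚ)) ≠ 0 := by
    have := csize_pos ρ
    positivity
  field_simp

theorem cInd_mem_Wset_of_fixed {g' : Perm (Fin (n+1))} (p : Fin (n+1))
    (hp : g' p = p) : cInd g' ∈ Wset n := by
  set c₀ := swap p (Fin.last n) with hc₀def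
  have hc₀ : c₀⁻¹ = c₀ := Equiv.swap_inv p (Fin.last n)
  have hlast : (c₀ * g' * c₀⁻¹) (Fin.last n) = Fin.last n := by
    rw [hc₀]
    simp only [Equiv.Perm.mul_apply, hc₀def, swap_apply_right, hp, swap_apply_left]
  obtain ⟨h₁, hι⟩ := exists_iotaPerm_eq hlast
  set b := cInd h₁ with hbdef
  have hbnn : ∀ σ, 0 ≤ b σ := by
    intro σ
    rw [hbdef, cInd_apply]
    split <;> norm_num
  have hbcf : IsClassFun b := isClassFun_cInd h₁
  have hconj_g₀ : IsConj g' (iotaPerm n h₁) := by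
    rw [hι]
    exact isConj_iff.2 ⟨c₀, rfl⟩
  have hW : ∀ u, (r1 n b) u ≠ 0 → IsConj g' u := by
    intro u hu
    rw [r1_apply] at hu
    have h2 : (∑ t : Perm (Fin (n+1)), (iota n b) (t⁻¹ * u * t)) ≠ 0 := by
      intro hcon
      rw [hcon, mul_zero] at hu
      exact hu rfl
    obtain ⟨t, _, ht⟩ := Finset.exists_ne_zero_of_sum_ne_zero h2
    by_cases hr : t⁻¹ * u * t ∈ Set.range (iotaPerm n)
    · obtain ⟨σ, hσ⟩ := hr
      rw [← hσ, iota_apply_iotaPerm] at ht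
      have h3 : IsConj h₁ σ := by
        by_contra hcon
        rw [hbdef, cInd_apply, if_neg hcon] at ht
        exact ht rfl
      obtain ⟨d, hd⟩ := isConj_iff.1 h3
      have h4 : iotaPerm n d * iotaPerm n h₁ * (iotaPerm n d)⁻¹ = iotaPerm n σ := by
        rw [← iotaPerm_inv, ← iotaPerm_mul, ← iotaPerm_mul, hd]
      have h5 : t * iotaPerm n σ * t⁻¹ = u := by
        rw [hσ]; group
      exact (hconj_g₀.trans (isConj_iff.2 ⟨iotaPerm n d, h4⟩)).trans (isConj_iff.2 ⟨t, h5⟩)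
    · rw [iota_apply_notin b hr] at ht
      exact absurd rfl ht
  have hval : 0 < (r1 n b) g' := by
    rw [r1_apply]
    apply mul_pos
    · have h6 : (0:ℚ) < (n.factorial : ℚ) := by
        exact_mod_cast Nat.factorial_pos n
      exact inv_pos.2 h6
    · have hterm : (iota n b) ((c₀⁻¹)⁻¹ * g' * c₀⁻¹) = 1 := by
        have h6 : (c₀⁻¹)⁻¹ * g' * c₀⁻¹ = iotaPerm n h₁ := by
          rw [inv_inv, hι]
        rw [h6, iota_apply_iotaPerm, hbdef, cInd_apply, if_pos (IsConj.refl h₁)]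
      refine Finset.sum_pos' (fun t _ => iota_nonneg b hbnn _) ⟨c₀⁻¹, mem_univ _, ?_⟩
      rw [hterm]
      norm_num
  set q := (r1 n b) g' with hqdef
  have hre2 : r1 n b = q • cInd g' := collapse (r1 n b) (isClassFun_r1 b) g' hW
  have hfin : cInd g' = q⁻¹ • r1 n b := by
    rw [hre2, smul_smul, inv_mul_cancel₀ (ne_of_gt hval), one_smul]
  rw [hfin]
  apply Submodule.smul_mem
  exact ⟨0, b, isClassFun_zero, hbcf, by rw [cup_zero_right, zero_add]⟩

end R1

section Main

open scoped Classical

variable {n : ℕ} {N : ℕ}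

lemma isClassFun_cup_tau (a : MonoidAlgebra ℚ (Perm (Fin N))) (ha : IsClassFun a) :
    IsClassFun (cup (tau N) a) := by
  intro v u
  rw [cup_tau_apply, cup_tau_apply]
  rw [← Equiv.sum_comp (MulAut.conj v).toEquiv
    (fun σ : Perm (Fin N) =>
      if σ.IsSwap ∧ permDeg σ + permDeg (σ⁻¹ * (v * u * v⁻¹)) = permDeg (v * u * v⁻¹)
      then a (σ⁻¹ * (v * u * v⁻¹)) else 0)]
  apply Finset.sum_congr rfl
  intro σ _
  have he : (MulAut.conj v).toEquiv σ = v * σ * v⁻¹ := rfl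
  rw [he]
  have h1 : (v * σ * v⁻¹)⁻¹ * (v * u * v⁻¹) = v * (σ⁻¹ * u) * v⁻¹ := by group
  have h3 : permDeg ((v * σ * v⁻¹)⁻¹ * (v * u * v⁻¹)) = permDeg (σ⁻¹ * u) := by
    rw [h1, permDeg_conj]
  have h5 : a ((v * σ * v⁻¹)⁻¹ * (v * u * v⁻¹)) = a (σ⁻¹ * u) := by
    rw [h1]
    exact ha v (σ⁻¹ * u)
  have h6 : (v * σ * v⁻¹).IsSwap ↔ σ.IsSwap := by
    constructor
    · rintro ⟨x, y, hxy, hs⟩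
      refine ⟨v⁻¹ x, v⁻¹ y, fun hc => hxy ?_, ?_⟩
      · rw [← Equiv.Perm.apply_inv_self v x, hc, Equiv.Perm.apply_inv_self]
      · rw [swap_apply_apply, ← hs]
        group
    · rintro ⟨x, y, hxy, hs⟩
      exact ⟨v x, v y, fun hc => hxy (v.injective hc), by rw [hs, swap_apply_apply]⟩
  rw [h3, permDeg_conj v σ, permDeg_conj v u, h5]
  exact if_congr (and_congr h6 Iff.rfl) rfl rfl

theorem cInd_mem_Wset_aux :
    ∀ (m : ℕ) (g' : Perm (Fin (n+1))), (n+1) * (n+1) - fsum g' = m → cInd g' ∈ Wset n := by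
  intro m
  induction m using Nat.strong_induction_on with
  | _ m ih =>
    intro g' hm
    by_cases hfix0 : ∃ p, g' p = p
    · obtain ⟨p, hp⟩ := hfix0
      exact cInd_mem_Wset_of_fixed p hp
    push_neg at hfix0
    obtain ⟨z, _, hz⟩ := Finset.exists_min_image (univ : Finset (Fin (n+1)))
      (osize g') ⟨0, mem_univ 0⟩
    have hzmin : ∀ w, osize g' z ≤ osize g' w := fun w => hz w (mem_univ w)
    set π := swap z (g' z) * g' with hπdef
    set F := cup (tau (n+1)) (cInd π) with hFdef
    have hFcf : IsClassFun F := isClassFun_cup_tau _ (isClassFun_cInd π)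
    have hFW : F ∈ Wset n :=
      ⟨cInd π, 0, isClassFun_cInd π, isClassFun_zero, by rw [r1_zero, add_zero]⟩
    have hzne : z ≠ g' z := fun h => hfix0 z h.symm
    have hscz : g'.SameCycle z (g' z) := ⟨1, by simp⟩
    have hFval : 1 ≤ F g' := by
      rw [hFdef, cup_tau_apply]
      have hnn : ∀ σ : Perm (Fin (n+1)), 0 ≤ (if σ.IsSwap ∧
          permDeg σ + permDeg (σ⁻¹ * g') = permDeg g'
          then (cInd π) (σ⁻¹ * g') else 0) := by
        intro σ
        split
        · rw [cInd_apply]; split <;> norm_num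
        · exact le_refl 0
      have hterm : (if (swap z (g' z)).IsSwap ∧ permDeg (swap z (g' z))
            + permDeg ((swap z (g' z))⁻¹ * g') = permDeg g'
          then (cInd π) ((swap z (g' z))⁻¹ * g') else 0) = 1 := by
        have hsw : (swap z (g' z)).IsSwap := ⟨z, g' z, hzne, rfl⟩
        have hinv : (swap z (g' z))⁻¹ = swap z (g' z) := Equiv.swap_inv _ _
        have hcond : permDeg (swap z (g' z)) + permDeg ((swap z (g' z))⁻¹ * g')
            = permDeg g' := by
          rw [hinv, permDeg_swap hzne]
          have h7 := permDeg_split hzne hscz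
          omega
        rw [if_pos ⟨hsw, hcond⟩, hinv, cInd_apply, if_pos (IsConj.refl _)]
      calc (1:ℚ) = _ := hterm.symm
        _ ≤ _ := Finset.single_le_sum (fun σ _ => hnn σ) (mem_univ (swap z (g' z)))
    have hre := regroup F hFcf
    rw [← Finset.sum_filter_add_sum_filter_not univ (fun u => IsConj g' u)] at hre
    have h1 : (∑ u ∈ univ.filter (fun u => IsConj g' u),
        (F u / (csize u:ℚ)) • cInd u) = F g' • cInd g' := by
      have hterm : ∀ u ∈ univ.filter (fun u => IsConj g' u),
          (F u / (csize u : ℚ)) • cInd u = (F g' / (csize g' : ℚ)) • cInd g' := by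
        intro u hu
        rw [Finset.mem_filter] at hu
        rw [classFun_eq_of_isConj hFcf hu.2.symm, csize_eq_of_isConj hu.2.symm,
          cInd_eq_of_isConj hu.2.symm]
      rw [Finset.sum_congr rfl hterm, Finset.sum_const]
      have hcard : (univ.filter fun u => IsConj g' u).card = csize g' := rfl
      rw [hcard, ← Nat.cast_smul_eq_nsmul ℚ, smul_smul]
      congr 1
      have h4 : ((csize g' : ℚ)) ≠ 0 := by
        have := csize_pos g'
        positivity
      field_simp
    have h2 : (∑ u ∈ univ.filter (fun u => ¬ IsConj g' u),
        (F u / (csize u:ℚ)) • cInd u) ∈ Wset n := by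
      apply Submodule.sum_mem
      intro u hu
      rw [Finset.mem_filter] at hu
      by_cases hFu : F u = 0
      · rw [hFu, zero_div, zero_smul]
        exact Submodule.zero_mem _
      apply Submodule.smul_mem
      rw [hFdef, cup_tau_apply] at hFu
      obtain ⟨σ, _, hσ⟩ := Finset.exists_ne_zero_of_sum_ne_zero hFu
      have hcond : (σ.IsSwap ∧ permDeg σ + permDeg (σ⁻¹ * u) = permDeg u) := by
        by_contra hcon
        rw [if_neg hcon] at hσ
        exact hσ rfl
      rw [if_pos hcond] at hσ
      have hconj : IsConj π (σ⁻¹ * u) := by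
        by_contra hcon
        rw [cInd_apply, if_neg hcon] at hσ
        exact hσ rfl
      obtain ⟨⟨x, y, hxy, hσs⟩, hdeg⟩ := hcond
      subst hσs
      rw [Equiv.swap_inv] at hconj hdeg
      have h7 := cup_cond (π := swap x y * u) hxy
      rw [Equiv.swap_mul_self_mul] at h7
      have hsc_u : u.SameCycle x y := h7.1 hdeg
      by_cases hufix : ∃ p, u p = p
      · obtain ⟨p, hp⟩ := hufix
        exact cInd_mem_Wset_of_fixed p hp
      push_neg at hufix
      rcases crux hfix0 hufix hzmin hxy hsc_u hconj with hcase | hcase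
      · exact absurd hcase hu.2
      · have hle1 : fsum g' ≤ (n+1) * (n+1) := by
          have h8 := fsum_le g'
          rwa [Fintype.card_fin] at h8
        have hle2 : fsum u ≤ (n+1) * (n+1) := by
          have h8 := fsum_le u
          rwa [Fintype.card_fin] at h8
        exact ih ((n+1) * (n+1) - fsum u) (by omega) u rfl
    set RST := (∑ u ∈ univ.filter (fun u => ¬ IsConj g' u),
      (F u / (csize u:ℚ)) • cInd u) with hRdef
    set q := F g' with hq
    rw [h1] at hre
    have hq0 : q ≠ 0 := by
      intro hc
      rw [hc] at hFval
      norm_num at hFval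
    have hfin : cInd g' = q⁻¹ • (F - RST) := by
      rw [hre]
      rw [add_sub_cancel_right, smul_smul, inv_mul_cancel₀ hq0, one_smul]
    rw [hfin]
    exact Submodule.smul_mem _ _ (Submodule.sub_mem _ hFW h2)

theorem cInd_mem_Wset (g' : Perm (Fin (n+1))) : cInd g' ∈ Wset n :=
  cInd_mem_Wset_aux _ g' rfl

end Main

end CFD

theorem classFun_decomposition (n : ℕ)
    (y : MonoidAlgebra ℚ (Equiv.Perm (Fin (n + 1)))) (hy : IsClassFun y) :
    ∃ a : MonoidAlgebra ℚ (Equiv.Perm (Fin (n + 1))), IsClassFun a ∧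
    ∃ b : MonoidAlgebra ℚ (Equiv.Perm (Fin n)), IsClassFun b ∧
      y = cup (tau (n + 1)) a + r1 n b := by
  have hmem : y ∈ CFD.Wset n := by
    rw [CFD.regroup y hy]
    apply Submodule.sum_mem
    intro u _
    exact Submodule.smul_mem _ _ (CFD.cInd_mem_Wset u)
  obtain ⟨a, b, ha, hb, heq⟩ := hmem
  exact ⟨a, ha, b, hb, heq⟩

end
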